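/- Let n≥1 be an integer, let A, B ∈ ℂ, and let z_1,…,z_n ∈ ℂ satisfy z_j ≠ 0 for all j and z_k² ≠ z_l² for all k ≠ l (so that every denominator below is nonzero). Then Σ_{ε∈{±1}^n} Π_{1≤k<l≤n} (ε_k z_k + ε_l z_l − 1)/(ε_k z_k + ε_l z_l) · Π_{j=1}^n (ε_j z_j + A)(ε_j z_j + B)/(ε_j z_j) = 2^n Π_{j=0}^{n−1} (A + B − j). -/

import Mathlib

open Complex Finset

/-- The sign `±1 ∈ ℂ` associated to a boolean. -/
def pmSign (b : Bool) : ℂ := if b then 1 else -1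



section pairs
variable {M : Type*} [CommMonoid M] {ι : Type*} [LinearOrder ι] [DecidableEq ι]

lemma filter_lt_insert (S : Finset ι) (m : ι) (hm : m ∉ S) :
    ((insert m S ×ˢ insert m S).filter (fun p : ι × ι => p.1 < p.2))
    = (((S ×ˢ S).filter (fun p : ι × ι => p.1 < p.2))
      ∪ (S.filter (· < m)).image (fun j => (j, m)))
      ∪ (S.filter (m < ·)).image (fun j => (m, j)) := by
  ext ⟨a, b⟩
  simp only [mem_filter, mem_product, mem_insert, mem_union, mem_image, Prod.mk.injEq]
  constructor
  · rintro ⟨⟨ha, hb⟩, hab⟩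
    rcases ha with rfl | ha
    · rcases hb with rfl | hb
      · exact absurd hab (lt_irrefl _)
      · exact Or.inr ⟨b, ⟨hb, hab⟩, rfl, rfl⟩
    · rcases hb with rfl | hb
      · exact Or.inl (Or.inr ⟨a, ⟨ha, hab⟩, rfl, rfl⟩)
      · exact Or.inl (Or.inl ⟨⟨ha, hb⟩, hab⟩)
  · rintro ((⟨⟨ha, hb⟩, hab⟩ | ⟨j, ⟨hj, hjm⟩, rfl, rfl⟩) | ⟨j, ⟨hj, hmj⟩, rfl, rfl⟩)
    · exact ⟨⟨Or.inr ha, Or.inr hb⟩, hab⟩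
    · exact ⟨⟨Or.inr hj, Or.inl rfl⟩, hjm⟩
    · exact ⟨⟨Or.inl rfl, Or.inr hj⟩, hmj⟩

lemma prod_pairs_insert (f : ι → ι → M) (S : Finset ι) (m : ι) (hm : m ∉ S)
    (hf : ∀ a b, f a b = f b a) :
    ∏ p ∈ ((insert m S ×ˢ insert m S).filter (fun p : ι × ι => p.1 < p.2)), f p.1 p.2
    = (∏ p ∈ ((S ×ˢ S).filter (fun p : ι × ι => p.1 < p.2)), f p.1 p.2) * ∏ j ∈ S, f j m := by
  rw [filter_lt_insert S m hm]
  rw [prod_union, prod_union]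
  · rw [prod_image, prod_image]
    · have h1 : ∏ j ∈ S.filter (m < ·), f m j = ∏ j ∈ S.filter (m < ·), f j m :=
        prod_congr rfl fun j _ => hf m j
      rw [h1, mul_assoc, ← prod_union]
      · congr 1
        congr 1
        ext j
        simp only [mem_union, mem_filter, mem_filter]
        constructor
        · rintro (⟨h, _⟩ | ⟨h, _⟩) <;> exact h
        · intro hj
          rcases lt_or_gt_of_ne (fun h : j = m => hm (h ▸ hj)) with h | h
          · exact Or.inl ⟨hj, h⟩
          · exact Or.inr ⟨hj, h⟩
      · rw [disjoint_left]
        intro a h1 h2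
        simp only [mem_filter] at h1 h2
        exact absurd (h1.2.trans h2.2) (lt_irrefl _)
    · intro a _ b _ h; simpa using h
    · intro a _ b _ h; simpa using h
  · -- disjoint (P S) (image (·, m))
    rw [disjoint_left]
    rintro ⟨a, b⟩ hp hq
    simp only [mem_filter, mem_product] at hp
    simp only [mem_image, Prod.mk.injEq] at hq
    obtain ⟨j, hj, rfl, rfl⟩ := hq
    exact hm hp.1.2
  · rw [disjoint_left]
    rintro ⟨a, b⟩ hp hq
    simp only [mem_union, mem_filter, mem_product, mem_image, Prod.mk.injEq] at hp hq
    obtain ⟨j, hj, rfl, rfl⟩ := hq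
    rcases hp with ⟨⟨h, _⟩, _⟩ | ⟨j', hj', h, _⟩
    · exact hm h
    · exact hm (h ▸ hj'.1)
end pairs

private lemma final_scalar (x wm A B c Q G1 G2 : ℂ) (hx : x ≠ 0) (hwm : wm ≠ 0)
    (hxm : x + wm ≠ 0) :
    x * ((wm + x - 1) / (wm + x)) + (A + B - c) * ((wm + x - 1) / (wm + x))
      + A * B * Q / x * ((wm + x - 1) / (wm + x)) + (G1 + G2 / (x + wm))
    = x + (A + B - (c + 1)) + A * B * ((wm - 1) / wm * Q) / x
      + ((wm - (A + B - c) + A * B * Q / wm + G2) / (x + wm) + G1) := by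
  have h2 : wm + x ≠ 0 := fun h => hxm (by linear_combination h)
  field_simp
  ring

private lemma split_scalar (tk x wk wm : ℂ) (h1 : x + wk ≠ 0) (h2 : wm - wk ≠ 0)
    (h3 : wm + x ≠ 0) :
    tk / (x + wk) * ((wm + x - 1) / (wm + x))
    = tk * ((wm - wk - 1) / (wm - wk)) / (x + wk) + tk / (wm - wk) / (x + wm) := by
  have h3' : x + wm ≠ 0 := by intro h; exact h3 (by linear_combination h)
  field_simp
  ring

lemma partial_frac {ι : Type*} [DecidableEq ι] (A B : ℂ) (w : ι → ℂ) (S : Finset ι)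
    (hw0 : ∀ j ∈ S, w j ≠ 0) (hwd : ∀ j ∈ S, ∀ k ∈ S, j ≠ k → w j ≠ w k) :
    ∀ x : ℂ, x ≠ 0 → (∀ j ∈ S, x + w j ≠ 0) →
    (x + A) * (x + B) / x * ∏ j ∈ S, (w j + x - 1) / (w j + x)
    = x + (A + B - S.card) + A * B * (∏ j ∈ S, (w j - 1) / w j) / x
      + ∑ k ∈ S, ((A - w k) * (B - w k) / w k
          * ∏ j ∈ S.erase k, (w j - w k - 1) / (w j - w k)) / (x + w k) := by
  induction S using Finset.induction_on with
  | empty =>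
    intro x hx _
    simp only [prod_empty, sum_empty, card_empty, Nat.cast_zero, mul_one, add_zero, sub_zero]
    field_simp
    ring
  | @insert m S hm IH =>
    intro x hx hxw
    have hw0' : ∀ j ∈ S, w j ≠ 0 := fun j hj => hw0 j (mem_insert_of_mem hj)
    have hwm : w m ≠ 0 := hw0 m (mem_insert_self m S)
    have hwd' : ∀ j ∈ S, ∀ k ∈ S, j ≠ k → w j ≠ w k := fun j hj k hk =>
      hwd j (mem_insert_of_mem hj) k (mem_insert_of_mem hk)
    have hxw' : ∀ j ∈ S, x + w j ≠ 0 := fun j hj => hxw j (mem_insert_of_mem hj)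
    have hxm : x + w m ≠ 0 := hxw m (mem_insert_self m S)
    have hjm : ∀ j ∈ S, w j ≠ w m := fun j hj =>
      hwd j (mem_insert_of_mem hj) m (mem_insert_self m S) (fun h => hm (h ▸ hj))
    have hmj : ∀ j ∈ S, -w m + w j ≠ 0 := fun j hj => by
      have := hjm j hj; intro h; apply this; linear_combination h
    have IHx := IH hw0' hwd' x hx hxw'
    have IHm := IH hw0' hwd' (-w m) (neg_ne_zero.mpr hwm) hmj
    -- massage IHm
    have hprod : ∀ j ∈ S, (w j + -w m - 1) / (w j + -w m) = (w j - w m - 1) / (w j - w m) := by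
      intro j hj; ring_nf
    rw [prod_congr rfl hprod] at IHm
    have hqm : (-w m + A) * (-w m + B) / -w m = -((A - w m) * (B - w m) / w m) := by
      rw [div_neg, show (-w m + A) * (-w m + B) = (A - w m) * (B - w m) from by ring]
    rw [hqm, neg_mul, div_neg] at IHm
    have hsm : ∀ k ∈ S, ((A - w k) * (B - w k) / w k
          * ∏ j ∈ S.erase k, (w j - w k - 1) / (w j - w k)) / (-w m + w k)
        = -(((A - w k) * (B - w k) / w k
          * ∏ j ∈ S.erase k, (w j - w k - 1) / (w j - w k)) / (w m - w k)) := by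
      intro k hk
      rw [show -w m + w k = -(w m - w k) from by ring, div_neg]
    rw [sum_congr rfl hsm, sum_neg_distrib] at IHm
    have hPm : (A - w m) * (B - w m) / w m * ∏ j ∈ S, (w j - w m - 1) / (w j - w m)
        = w m - (A + B - S.card) + A * B * (∏ j ∈ S, (w j - 1) / w j) / w m
          + ∑ k ∈ S, ((A - w k) * (B - w k) / w k
              * ∏ j ∈ S.erase k, (w j - w k - 1) / (w j - w k)) / (w m - w k) := by
      linear_combination -IHm
    -- rewrite LHS
    rw [prod_insert hm,
      show (x + A) * (x + B) / x
          * ((w m + x - 1) / (w m + x) * ∏ j ∈ S, (w j + x - 1) / (w j + x))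
        = ((x + A) * (x + B) / x * ∏ j ∈ S, (w j + x - 1) / (w j + x))
          * ((w m + x - 1) / (w m + x)) from by ring,
      IHx]
    -- rewrite RHS structure
    rw [card_insert_of_notMem hm, prod_insert hm, sum_insert hm, erase_insert hm]
    have hsum_rhs : ∀ k ∈ S,
        ((A - w k) * (B - w k) / w k
          * ∏ j ∈ (insert m S).erase k, (w j - w k - 1) / (w j - w k)) / (x + w k)
        = ((A - w k) * (B - w k) / w k * ∏ j ∈ S.erase k, (w j - w k - 1) / (w j - w k))
            * ((w m - w k - 1) / (w m - w k)) / (x + w k) := by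
      intro k hk
      have hkm : k ≠ m := fun h => hm (h ▸ hk)
      rw [erase_insert_of_ne (Ne.symm hkm), prod_insert (fun h => hm (mem_of_mem_erase h))]
      ring
    rw [sum_congr rfl hsum_rhs]
    -- distribute on LHS
    rw [add_mul, add_mul, add_mul, sum_mul]
    have perk : ∀ k ∈ S,
        ((A - w k) * (B - w k) / w k * ∏ j ∈ S.erase k, (w j - w k - 1) / (w j - w k))
            / (x + w k) * ((w m + x - 1) / (w m + x))
        = ((A - w k) * (B - w k) / w k * ∏ j ∈ S.erase k, (w j - w k - 1) / (w j - w k))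
            * ((w m - w k - 1) / (w m - w k)) / (x + w k)
          + ((A - w k) * (B - w k) / w k * ∏ j ∈ S.erase k, (w j - w k - 1) / (w j - w k))
            / (w m - w k) / (x + w m) := by
      intro k hk
      exact split_scalar _ _ _ _ (hxw' k hk)
        (sub_ne_zero.mpr fun h => hjm k hk h.symm) (fun h => hxm (by linear_combination h))
    rw [sum_congr rfl perk, sum_add_distrib, ← sum_div, hPm]
    push_cast
    linear_combination final_scalar x (w m) A B (S.card : ℂ) (∏ j ∈ S, (w j - 1) / w j)
      (∑ k ∈ S, ((A - w k) * (B - w k) / w k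
          * ∏ j ∈ S.erase k, (w j - w k - 1) / (w j - w k))
          * ((w m - w k - 1) / (w m - w k)) / (x + w k))
      (∑ k ∈ S, ((A - w k) * (B - w k) / w k
          * ∏ j ∈ S.erase k, (w j - w k - 1) / (w j - w k)) / (w m - w k))
      hx hwm hxm

private def sgn {n : ℕ} (T : Finset (Fin n)) (j : Fin n) : ℂ := if j ∈ T then 1 else -1

private lemma sgn_ne {n : ℕ} (T : Finset (Fin n)) (j : Fin n) : sgn T j ≠ 0 := by
  unfold sgn; split <;> norm_num

private lemma sgn_sq {n : ℕ} (T : Finset (Fin n)) (j : Fin n) : sgn T j ^ 2 = 1 := by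
  unfold sgn; split <;> norm_num

private lemma sgn_not_mem {n : ℕ} {T : Finset (Fin n)} {j : Fin n} (h : j ∉ T) :
    sgn T j = -1 := if_neg h

private lemma sgn_insert_self {n : ℕ} (T : Finset (Fin n)) (m : Fin n) :
    sgn (insert m T) m = 1 := if_pos (mem_insert_self m T)

private lemma sgn_insert_ne {n : ℕ} (T : Finset (Fin n)) {j m : Fin n} (h : j ≠ m) :
    sgn (insert m T) j = sgn T j := by
  unfold sgn; simp [mem_insert, h]

private lemma combine_scalar (tk u xm : ℂ) (h1 : xm + u ≠ 0) (h2 : -xm + u ≠ 0) :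
    tk / (xm + u) + tk / (-xm + u) = tk * (2 * u / (u ^ 2 - xm ^ 2)) := by
  have h3 : u ^ 2 - xm ^ 2 ≠ 0 := by
    intro h
    rcases mul_eq_zero.mp (show (xm + u) * (-xm + u) = 0 by linear_combination h) with h' | h'
    · exact h1 h'
    · exact h2 h'
  field_simp
  ring

private lemma step_sum {ι : Type*} [DecidableEq ι] (A B : ℂ) (S : Finset ι)
    (u : ι → ℂ) (xm : ℂ)
    (hu0 : ∀ j ∈ S, u j ≠ 0) (hud : ∀ j ∈ S, ∀ k ∈ S, j ≠ k → u j ≠ u k)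
    (hxm : xm ≠ 0) (hxu : ∀ j ∈ S, xm + u j ≠ 0) (hxu' : ∀ j ∈ S, -xm + u j ≠ 0) :
    (xm + A) * (xm + B) / xm * ∏ j ∈ S, (u j + xm - 1) / (u j + xm)
      + (-xm + A) * (-xm + B) / -xm * ∏ j ∈ S, (u j + -xm - 1) / (u j + -xm)
    = 2 * (A + B - S.card)
      + ∑ k ∈ S, ((A - u k) * (B - u k) / u k
          * ∏ j ∈ S.erase k, (u j - u k - 1) / (u j - u k)) * (2 * u k / (u k ^ 2 - xm ^ 2)) := by
  rw [partial_frac A B u S hu0 hud xm hxm hxu,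
    partial_frac A B u S hu0 hud (-xm) (neg_ne_zero.mpr hxm) hxu']
  have hS2 : (∑ k ∈ S, ((A - u k) * (B - u k) / u k
          * ∏ j ∈ S.erase k, (u j - u k - 1) / (u j - u k)) / (xm + u k))
      + (∑ k ∈ S, ((A - u k) * (B - u k) / u k
          * ∏ j ∈ S.erase k, (u j - u k - 1) / (u j - u k)) / (-xm + u k))
      = ∑ k ∈ S, ((A - u k) * (B - u k) / u k
          * ∏ j ∈ S.erase k, (u j - u k - 1) / (u j - u k)) * (2 * u k / (u k ^ 2 - xm ^ 2)) := by
    rw [← sum_add_distrib]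
    exact sum_congr rfl fun k hk => combine_scalar _ _ _ (hxu k hk) (hxu' k hk)
  rw [div_neg]
  linear_combination hS2

private lemma antisym {n : ℕ} (A B : ℂ) (z : Fin n → ℂ) (S : Finset (Fin n)) (k : Fin n)
    (hk : k ∈ S) (hzk : z k ≠ 0) :
    ∑ T ∈ S.powerset,
      ((∏ p ∈ ((S ×ˢ S).filter fun p : Fin n × Fin n => p.1 < p.2),
          (sgn T p.1 * z p.1 + sgn T p.2 * z p.2 - 1)
            / (sgn T p.1 * z p.1 + sgn T p.2 * z p.2))
        * ∏ j ∈ S, (sgn T j * z j + A) * (sgn T j * z j + B) / (sgn T j * z j))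
      * ((A - sgn T k * z k) * (B - sgn T k * z k) / (sgn T k * z k)
        * ∏ j ∈ S.erase k,
            (sgn T j * z j - sgn T k * z k - 1) / (sgn T j * z j - sgn T k * z k))
      * (sgn T k * z k) = 0 := by
  set E := S.erase k with hE
  have hS : S = insert k E := by rw [hE, insert_erase hk]
  have hkE : k ∉ E := by rw [hE]; exact notMem_erase k S
  rw [hS, sum_powerset_insert hkE, ← sum_add_distrib]
  apply sum_eq_zero
  intro T hT
  have hTE : T ⊆ E := mem_powerset.mp hT
  have hkT : k ∉ T := fun h => hkE (hTE h)
  have hne : ∀ j ∈ E, j ≠ k := fun j hj h => hkE (h ▸ hj)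
  have hsgj : ∀ j, j ≠ k → sgn (insert k T) j = sgn T j := fun j hj => sgn_insert_ne T hj
  -- split the pair products
  have hPP : ∀ T' : Finset (Fin n),
      (∏ p ∈ ((insert k E ×ˢ insert k E).filter fun p : Fin n × Fin n => p.1 < p.2),
        (sgn T' p.1 * z p.1 + sgn T' p.2 * z p.2 - 1)
          / (sgn T' p.1 * z p.1 + sgn T' p.2 * z p.2))
      = (∏ p ∈ ((E ×ˢ E).filter fun p : Fin n × Fin n => p.1 < p.2),
          (sgn T' p.1 * z p.1 + sgn T' p.2 * z p.2 - 1)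
            / (sgn T' p.1 * z p.1 + sgn T' p.2 * z p.2))
        * ∏ j ∈ E, (sgn T' j * z j + sgn T' k * z k - 1)
            / (sgn T' j * z j + sgn T' k * z k) :=
    fun T' => prod_pairs_insert
      (fun a b => (sgn T' a * z a + sgn T' b * z b - 1) / (sgn T' a * z a + sgn T' b * z b))
      E k hkE (fun a b => by rw [add_comm (sgn T' a * z a)])
  rw [hPP T, hPP (insert k T), prod_insert hkE, prod_insert hkE]
  simp only [sgn_not_mem hkT, sgn_insert_self, neg_one_mul, one_mul]
  -- replace sgn (insert k T) by sgn T everywhere (indices in E are ≠ k)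
  have c1 : (∏ p ∈ ((E ×ˢ E).filter fun p : Fin n × Fin n => p.1 < p.2),
        (sgn (insert k T) p.1 * z p.1 + sgn (insert k T) p.2 * z p.2 - 1)
          / (sgn (insert k T) p.1 * z p.1 + sgn (insert k T) p.2 * z p.2))
      = ∏ p ∈ ((E ×ˢ E).filter fun p : Fin n × Fin n => p.1 < p.2),
        (sgn T p.1 * z p.1 + sgn T p.2 * z p.2 - 1)
          / (sgn T p.1 * z p.1 + sgn T p.2 * z p.2) := by
    refine prod_congr rfl fun p hp => ?_
    simp only [mem_filter, mem_product] at hp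
    rw [hsgj p.1 (hne _ hp.1.1), hsgj p.2 (hne _ hp.1.2)]
  have c2 : (∏ j ∈ E, (sgn (insert k T) j * z j + z k - 1) / (sgn (insert k T) j * z j + z k))
      = ∏ j ∈ E, (sgn T j * z j + z k - 1) / (sgn T j * z j + z k) :=
    prod_congr rfl fun j hj => by rw [hsgj j (hne _ hj)]
  have c3 : (∏ j ∈ E, (sgn (insert k T) j * z j + A) * (sgn (insert k T) j * z j + B)
        / (sgn (insert k T) j * z j))
      = ∏ j ∈ E, (sgn T j * z j + A) * (sgn T j * z j + B) / (sgn T j * z j) :=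
    prod_congr rfl fun j hj => by rw [hsgj j (hne _ hj)]
  have c4 : (∏ j ∈ E, (sgn (insert k T) j * z j - z k - 1) / (sgn (insert k T) j * z j - z k))
      = ∏ j ∈ E, (sgn T j * z j - z k - 1) / (sgn T j * z j - z k) :=
    prod_congr rfl fun j hj => by rw [hsgj j (hne _ hj)]
  rw [c1, c2, c3, c4]
  -- combine the j-products over E
  have h1 : (∏ j ∈ E, (sgn T j * z j + z k - 1) / (sgn T j * z j + z k))
        * (∏ j ∈ E, (sgn T j * z j - z k - 1) / (sgn T j * z j - z k))
      = ∏ j ∈ E, ((sgn T j * z j + z k - 1) * (sgn T j * z j - z k - 1))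
          / ((sgn T j * z j + z k) * (sgn T j * z j - z k)) := by
    rw [← prod_mul_distrib]
    exact prod_congr rfl fun j hj => by rw [div_mul_div_comm]
  have h2 : (∏ j ∈ E, (sgn T j * z j + -z k - 1) / (sgn T j * z j + -z k))
        * (∏ j ∈ E, (sgn T j * z j - -z k - 1) / (sgn T j * z j - -z k))
      = ∏ j ∈ E, ((sgn T j * z j + z k - 1) * (sgn T j * z j - z k - 1))
          / ((sgn T j * z j + z k) * (sgn T j * z j - z k)) := by
    rw [← prod_mul_distrib]
    refine prod_congr rfl fun j hj => ?_
    rw [div_mul_div_comm]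
    congr 1 <;> ring
  have h3 : (-z k + A) * (-z k + B) / -z k * ((A - -z k) * (B - -z k) / -z k) * -z k
      + (z k + A) * (z k + B) / z k * ((A - z k) * (B - z k) / z k) * z k = 0 := by
    field_simp
    ring
  set PPE := ∏ p ∈ ((E ×ˢ E).filter fun p : Fin n × Fin n => p.1 < p.2),
    (sgn T p.1 * z p.1 + sgn T p.2 * z p.2 - 1) / (sgn T p.1 * z p.1 + sgn T p.2 * z p.2)
  set Q0 := ∏ j ∈ E, (sgn T j * z j + A) * (sgn T j * z j + B) / (sgn T j * z j)
  set PM := ∏ j ∈ E, ((sgn T j * z j + z k - 1) * (sgn T j * z j - z k - 1))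
      / ((sgn T j * z j + z k) * (sgn T j * z j - z k))
  linear_combination
    (PPE * Q0 * ((-z k + A) * (-z k + B) / -z k) * ((A - -z k) * (B - -z k) / -z k) * -z k) * h2
    + (PPE * Q0 * ((z k + A) * (z k + B) / z k) * ((A - z k) * (B - z k) / z k) * z k) * h1
    + (PPE * Q0 * PM) * h3

private lemma sign_mul_ne (a b s t : ℂ) (hs : s ^ 2 = 1) (ht : t ^ 2 = 1)
    (hab : a ^ 2 ≠ b ^ 2) : s * a ≠ t * b := by
  intro h
  apply hab
  have h2 : (s * a) ^ 2 = (t * b) ^ 2 := by rw [h]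
  rw [mul_pow, mul_pow, hs, ht, one_mul, one_mul] at h2
  exact h2

private lemma add_sign_ne (a b s : ℂ) (hs : s ^ 2 = 1) (hab : b ^ 2 ≠ a ^ 2) :
    a + s * b ≠ 0 := by
  intro h
  apply hab
  have h2 : (s * b) ^ 2 = (-a) ^ 2 := by rw [eq_neg_of_add_eq_zero_right h]
  rw [mul_pow, hs, one_mul, neg_sq] at h2
  exact h2

private lemma key {n : ℕ} (A B : ℂ) (z : Fin n → ℂ) (hz : ∀ j, z j ≠ 0)
    (hzz : ∀ k l, k ≠ l → z k ^ 2 ≠ z l ^ 2) (S : Finset (Fin n)) :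
    ∑ T ∈ S.powerset,
      (∏ p ∈ ((S ×ˢ S).filter fun p : Fin n × Fin n => p.1 < p.2),
        (sgn T p.1 * z p.1 + sgn T p.2 * z p.2 - 1) / (sgn T p.1 * z p.1 + sgn T p.2 * z p.2))
      * ∏ j ∈ S, (sgn T j * z j + A) * (sgn T j * z j + B) / (sgn T j * z j)
    = 2 ^ S.card * ∏ j ∈ range S.card, (A + B - (j : ℂ)) := by
  induction S using Finset.induction_on with
  | empty => simp
  | @insert m S hm IH =>
    rw [sum_powerset_insert hm, ← sum_add_distrib]
    have hterm : ∀ T ∈ S.powerset,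
        ((∏ p ∈ ((insert m S ×ˢ insert m S).filter fun p : Fin n × Fin n => p.1 < p.2),
            (sgn T p.1 * z p.1 + sgn T p.2 * z p.2 - 1)
              / (sgn T p.1 * z p.1 + sgn T p.2 * z p.2))
          * ∏ j ∈ insert m S, (sgn T j * z j + A) * (sgn T j * z j + B) / (sgn T j * z j))
        + ((∏ p ∈ ((insert m S ×ˢ insert m S).filter fun p : Fin n × Fin n => p.1 < p.2),
            (sgn (insert m T) p.1 * z p.1 + sgn (insert m T) p.2 * z p.2 - 1)
              / (sgn (insert m T) p.1 * z p.1 + sgn (insert m T) p.2 * z p.2))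
          * ∏ j ∈ insert m S, (sgn (insert m T) j * z j + A) * (sgn (insert m T) j * z j + B)
              / (sgn (insert m T) j * z j))
        = ((∏ p ∈ ((S ×ˢ S).filter fun p : Fin n × Fin n => p.1 < p.2),
            (sgn T p.1 * z p.1 + sgn T p.2 * z p.2 - 1)
              / (sgn T p.1 * z p.1 + sgn T p.2 * z p.2))
          * ∏ j ∈ S, (sgn T j * z j + A) * (sgn T j * z j + B) / (sgn T j * z j))
          * (2 * (A + B - S.card)
            + ∑ k ∈ S, ((A - sgn T k * z k) * (B - sgn T k * z k) / (sgn T k * z k)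
                * ∏ j ∈ S.erase k, (sgn T j * z j - sgn T k * z k - 1)
                    / (sgn T j * z j - sgn T k * z k))
              * (2 * (sgn T k * z k) / (z k ^ 2 - z m ^ 2))) := by
      intro T hT
      have hTS : T ⊆ S := mem_powerset.mp hT
      have hmT : m ∉ T := fun h => hm (hTS h)
      have hne : ∀ j ∈ S, j ≠ m := fun j hj h => hm (h ▸ hj)
      have hsgj : ∀ j, j ≠ m → sgn (insert m T) j = sgn T j := fun j hj => sgn_insert_ne T hj
      have hPP : ∀ T' : Finset (Fin n),
          (∏ p ∈ ((insert m S ×ˢ insert m S).filter fun p : Fin n × Fin n => p.1 < p.2),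
            (sgn T' p.1 * z p.1 + sgn T' p.2 * z p.2 - 1)
              / (sgn T' p.1 * z p.1 + sgn T' p.2 * z p.2))
          = (∏ p ∈ ((S ×ˢ S).filter fun p : Fin n × Fin n => p.1 < p.2),
              (sgn T' p.1 * z p.1 + sgn T' p.2 * z p.2 - 1)
                / (sgn T' p.1 * z p.1 + sgn T' p.2 * z p.2))
            * ∏ j ∈ S, (sgn T' j * z j + sgn T' m * z m - 1)
                / (sgn T' j * z j + sgn T' m * z m) :=
        fun T' => prod_pairs_insert
          (fun a b => (sgn T' a * z a + sgn T' b * z b - 1) / (sgn T' a * z a + sgn T' b * z b))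
          S m hm (fun a b => by rw [add_comm (sgn T' a * z a)])
      rw [hPP T, hPP (insert m T), prod_insert hm, prod_insert hm]
      simp only [sgn_not_mem hmT, sgn_insert_self, neg_one_mul, one_mul]
      have c1 : (∏ p ∈ ((S ×ˢ S).filter fun p : Fin n × Fin n => p.1 < p.2),
            (sgn (insert m T) p.1 * z p.1 + sgn (insert m T) p.2 * z p.2 - 1)
              / (sgn (insert m T) p.1 * z p.1 + sgn (insert m T) p.2 * z p.2))
          = ∏ p ∈ ((S ×ˢ S).filter fun p : Fin n × Fin n => p.1 < p.2),
            (sgn T p.1 * z p.1 + sgn T p.2 * z p.2 - 1)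
              / (sgn T p.1 * z p.1 + sgn T p.2 * z p.2) := by
        refine prod_congr rfl fun p hp => ?_
        simp only [mem_filter, mem_product] at hp
        rw [hsgj p.1 (hne _ hp.1.1), hsgj p.2 (hne _ hp.1.2)]
      have c2 : (∏ j ∈ S, (sgn (insert m T) j * z j + z m - 1) / (sgn (insert m T) j * z j + z m))
          = ∏ j ∈ S, (sgn T j * z j + z m - 1) / (sgn T j * z j + z m) :=
        prod_congr rfl fun j hj => by rw [hsgj j (hne _ hj)]
      have c3 : (∏ j ∈ S, (sgn (insert m T) j * z j + A) * (sgn (insert m T) j * z j + B)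
            / (sgn (insert m T) j * z j))
          = ∏ j ∈ S, (sgn T j * z j + A) * (sgn T j * z j + B) / (sgn T j * z j) :=
        prod_congr rfl fun j hj => by rw [hsgj j (hne _ hj)]
      rw [c1, c2, c3]
      -- apply the partial fraction step
      have hu0 : ∀ j ∈ S, sgn T j * z j ≠ 0 := fun j _ => mul_ne_zero (sgn_ne T j) (hz j)
      have hud : ∀ j ∈ S, ∀ k ∈ S, j ≠ k → sgn T j * z j ≠ sgn T k * z k :=
        fun j _ k _ hjk => sign_mul_ne _ _ _ _ (sgn_sq T j) (sgn_sq T k) (hzz j k hjk)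
      have hxu : ∀ j ∈ S, z m + sgn T j * z j ≠ 0 :=
        fun j hj => add_sign_ne _ _ _ (sgn_sq T j) (hzz j m (hne j hj))
      have hxu' : ∀ j ∈ S, -z m + sgn T j * z j ≠ 0 := by
        intro j hj
        refine add_sign_ne _ _ _ (sgn_sq T j) ?_
        rw [neg_sq]
        exact hzz j m (hne j hj)
      have hstep := step_sum A B S (fun j => sgn T j * z j) (z m) hu0 hud (hz m) hxu hxu'
      simp only [mul_pow, sgn_sq, one_mul] at hstep
      linear_combination ((∏ p ∈ ((S ×ˢ S).filter fun p : Fin n × Fin n => p.1 < p.2),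
          (sgn T p.1 * z p.1 + sgn T p.2 * z p.2 - 1)
            / (sgn T p.1 * z p.1 + sgn T p.2 * z p.2))
        * ∏ j ∈ S, (sgn T j * z j + A) * (sgn T j * z j + B) / (sgn T j * z j)) * hstep
    rw [sum_congr rfl hterm]
    have expand : ∀ T ∈ S.powerset,
        ((∏ p ∈ ((S ×ˢ S).filter fun p : Fin n × Fin n => p.1 < p.2),
            (sgn T p.1 * z p.1 + sgn T p.2 * z p.2 - 1)
              / (sgn T p.1 * z p.1 + sgn T p.2 * z p.2))
          * ∏ j ∈ S, (sgn T j * z j + A) * (sgn T j * z j + B) / (sgn T j * z j))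
          * (2 * (A + B - S.card)
            + ∑ k ∈ S, ((A - sgn T k * z k) * (B - sgn T k * z k) / (sgn T k * z k)
                * ∏ j ∈ S.erase k, (sgn T j * z j - sgn T k * z k - 1)
                    / (sgn T j * z j - sgn T k * z k))
              * (2 * (sgn T k * z k) / (z k ^ 2 - z m ^ 2)))
        = ((∏ p ∈ ((S ×ˢ S).filter fun p : Fin n × Fin n => p.1 < p.2),
            (sgn T p.1 * z p.1 + sgn T p.2 * z p.2 - 1)
              / (sgn T p.1 * z p.1 + sgn T p.2 * z p.2))
          * ∏ j ∈ S, (sgn T j * z j + A) * (sgn T j * z j + B) / (sgn T j * z j))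
          * (2 * (A + B - S.card))
          + ∑ k ∈ S, (((∏ p ∈ ((S ×ˢ S).filter fun p : Fin n × Fin n => p.1 < p.2),
              (sgn T p.1 * z p.1 + sgn T p.2 * z p.2 - 1)
                / (sgn T p.1 * z p.1 + sgn T p.2 * z p.2))
            * ∏ j ∈ S, (sgn T j * z j + A) * (sgn T j * z j + B) / (sgn T j * z j))
            * ((A - sgn T k * z k) * (B - sgn T k * z k) / (sgn T k * z k)
                * ∏ j ∈ S.erase k, (sgn T j * z j - sgn T k * z k - 1)
                    / (sgn T j * z j - sgn T k * z k))
            * (sgn T k * z k)) * (2 / (z k ^ 2 - z m ^ 2)) := by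
      intro T _
      rw [mul_add, mul_sum]
      congr 1
      exact sum_congr rfl fun k hk => by ring
    rw [sum_congr rfl expand, sum_add_distrib, ← sum_mul, IH, sum_comm]
    have hzero : ∀ k ∈ S,
        (∑ T ∈ S.powerset, (((∏ p ∈ ((S ×ˢ S).filter fun p : Fin n × Fin n => p.1 < p.2),
              (sgn T p.1 * z p.1 + sgn T p.2 * z p.2 - 1)
                / (sgn T p.1 * z p.1 + sgn T p.2 * z p.2))
            * ∏ j ∈ S, (sgn T j * z j + A) * (sgn T j * z j + B) / (sgn T j * z j))
            * ((A - sgn T k * z k) * (B - sgn T k * z k) / (sgn T k * z k)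
                * ∏ j ∈ S.erase k, (sgn T j * z j - sgn T k * z k - 1)
                    / (sgn T j * z j - sgn T k * z k))
            * (sgn T k * z k)) * (2 / (z k ^ 2 - z m ^ 2))) = 0 := by
      intro k hk
      rw [← sum_mul, antisym A B z S k hk (hz k), zero_mul]
    rw [sum_congr rfl hzero, Finset.sum_const_zero, add_zero,
      card_insert_of_notMem hm, prod_range_succ, pow_succ]
    push_cast
    ring


/-- **BC-type rational symmetrization identity.**
For `n ≥ 1`, `A B ∈ ℂ` and `z₁,…,z_n ∈ ℂ` with `z_j ≠ 0` and `z_k² ≠ z_l²` for `k ≠ l`,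
`Σ_{ε∈{±1}^n} Π_{k<l} (ε_k z_k + ε_l z_l − 1)/(ε_k z_k + ε_l z_l)
  · Π_j (ε_j z_j + A)(ε_j z_j + B)/(ε_j z_j) = 2^n Π_{j=0}^{n−1} (A + B − j)`. -/
theorem bc_symmetrization_identity (n : ℕ) (hn : 1 ≤ n) (A B : ℂ) (z : Fin n → ℂ)
    (hz : ∀ j, z j ≠ 0) (hzz : ∀ k l, k ≠ l → z k ^ 2 ≠ z l ^ 2) :
    ∑ ε : Fin n → Bool,
      (∏ p ∈ Finset.univ.filter (fun p : Fin n × Fin n => p.1 < p.2),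
        (pmSign (ε p.1) * z p.1 + pmSign (ε p.2) * z p.2 - 1)
          / (pmSign (ε p.1) * z p.1 + pmSign (ε p.2) * z p.2)) *
      ∏ j : Fin n,
        (pmSign (ε j) * z j + A) * (pmSign (ε j) * z j + B) / (pmSign (ε j) * z j)
    = 2 ^ n * ∏ j ∈ Finset.range n, (A + B - (j : ℂ)) := by
  have hkey := key A B z hz hzz Finset.univ
  rw [powerset_univ, card_univ, Fintype.card_fin, univ_product_univ] at hkey
  have hpm : ∀ (T : Finset (Fin n)) (j : Fin n), pmSign (decide (j ∈ T)) = sgn T j := by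
    intro T j
    by_cases h : j ∈ T <;> simp [pmSign, sgn, h]
  have hbij : Function.Bijective (fun (T : Finset (Fin n)) => fun j => decide (j ∈ T)) := by
    constructor
    · intro T T' h
      ext j
      have := congrFun h j
      simpa using this
    · intro ε
      refine ⟨Finset.univ.filter (fun j => ε j = true), ?_⟩
      funext j
      simp
  rw [← Fintype.sum_bijective _ hbij _ _ (fun T => ?_)] at *
  · exact hkey
  · simp only [hpm]
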